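/- Let (X, d) be a metric space and T : X → X non-expanding. If a point u ∈ X is non-wandering for T (for every ε > 0 there are infinitely many positive integers k such that the ε-ball around u meets its image under T^k), then u is recurrent: there exists a strictly increasing sequence of positive integers (kₙ) with d(T^{kₙ} u, u) → 0. -/

import Mathlib

theorem stmt_1 {X : Type*} [MetricSpace X] (T : X → X)
    (hne : ∀ x y : X, dist (T x) (T y) ≤ dist x y) (u : X)
    (hnw : ∀ ε > (0 : ℝ), ∀ N : ℕ, ∃ k : ℕ, N ≤ k ∧ 1 ≤ k ∧
      ∃ v : X, dist v u < ε ∧ dist (T^[k] v) u < ε) :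
    ∃ k : ℕ → ℕ, StrictMono k ∧ (∀ n, 1 ≤ k n) ∧
      Filter.Tendsto (fun n => dist (T^[k n] u) u) Filter.atTop (nhds 0) := by
  have hiter : ∀ k : ℕ, ∀ x y : X, dist (T^[k] x) (T^[k] y) ≤ dist x y := by
    intro k
    induction k with
    | zero => simp
    | succ n ih =>
      intro x y
      rw [Function.iterate_succ_apply', Function.iterate_succ_apply']
      exact (hne _ _).trans (ih x y)
  have key : ∀ ε > (0 : ℝ), ∀ N : ℕ, ∃ k, N ≤ k ∧ 1 ≤ k ∧ dist (T^[k] u) u < 2 * ε := by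
    intro ε hε N
    obtain ⟨k, hN, h1, v, hv, hTv⟩ := hnw ε hε N
    refine ⟨k, hN, h1, ?_⟩
    calc dist (T^[k] u) u ≤ dist (T^[k] u) (T^[k] v) + dist (T^[k] v) u := dist_triangle _ _ _
      _ ≤ dist u v + dist (T^[k] v) u := by gcongr; exact hiter k u v
      _ < ε + ε := by rw [dist_comm]; exact add_lt_add hv hTv
      _ = 2 * ε := by ring
  have hpos : ∀ n : ℕ, (0 : ℝ) < 1 / (n + 1) := by intro n; positivity
  choose F hF1 hF2 hF3 using fun (n N : ℕ) => key (1 / (n + 1)) (hpos n) N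
  set g : ℕ → ℕ := fun n => Nat.rec (F 0 1) (fun n ih => F (n + 1) (ih + 1)) n with hg
  have hgsucc : ∀ n, g (n + 1) = F (n + 1) (g n + 1) := fun n => rfl
  have hmono : StrictMono g := by
    apply strictMono_nat_of_lt_succ
    intro n
    have := hF1 (n + 1) (g n + 1)
    rw [hgsucc]; omega
  have hone : ∀ n, 1 ≤ g n := by
    intro n
    cases n with
    | zero => exact hF2 0 1
    | succ m => exact hF2 (m + 1) (g m + 1)
  refine ⟨g, hmono, hone, ?_⟩
  have hbd : ∀ n : ℕ, dist (T^[g n] u) u ≤ 2 * (1 / (n + 1)) := by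
    intro n
    cases n with
    | zero => exact (hF3 0 1).le
    | succ m => exact (hF3 (m + 1) (g m + 1)).le
  have hlim : Filter.Tendsto (fun n : ℕ => 2 * (1 / ((n : ℝ) + 1))) Filter.atTop (nhds 0) := by
    have := (tendsto_one_div_add_atTop_nhds_zero_nat :
      Filter.Tendsto (fun n : ℕ => 1 / ((n : ℝ) + 1)) Filter.atTop (nhds 0))
    simpa using this.const_mul 2
  exact squeeze_zero (fun n => dist_nonneg) hbd hlim
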